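/- arXiv:1702.00431 — 2 statements merged into one kernel-verified Lean document; each statement's English description precedes it below -/
import Mathlib

section
/- Let a_0, …, a_n and d₁, d₂ be positive integers such that: (1) for any three distinct indices i₁, i₂, i₃, gcd(a_{i₁}, a_{i₂}, a_{i₃}) = 1; (2) for every index i with a_i > 1, a_i divides d₁ or a_i divides d₂; (3) for any two distinct indices i, j with gcd(a_i, a_j) > 1, the number gcd(a_i, a_j) divides both d₁ and d₂; and (4) a_0 + a_1 + … + a_n > d₁ + d₂. Then the number of indices i ∈ {0, …, n} with a_i = 1 is at least (a_0 + a_1 + … + a_n) − d₁ − d₂. -/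
open Finset

/-- The number of ordered "cut" pairs of a colouring. -/
private def cutOf (n : ℕ) (a : Fin (n + 1) → ℕ) (c : Fin (n + 1) → Bool) : ℕ :=
  ((Finset.univ : Finset (Fin (n + 1) × Fin (n + 1))).filter
    (fun p => p.1 ≠ p.2 ∧ 1 < Nat.gcd (a p.1) (a p.2) ∧ c p.1 ≠ c p.2)).card

/-- A product of pairwise coprime divisors of `m` divides `m`. -/
private lemma prod_cop_dvd {ι : Type*} [DecidableEq ι] (t : Finset ι) (f : ι → ℕ) (m : ℕ)
    (hcop : ∀ j ∈ t, ∀ k ∈ t, j ≠ k → Nat.Coprime (f j) (f k))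
    (hdvd : ∀ j ∈ t, f j ∣ m) : (∏ j ∈ t, f j) ∣ m := by
  induction t using Finset.induction_on with
  | empty => simpa using one_dvd m
  | @insert i t hi ih =>
    rw [Finset.prod_insert hi]
    refine Nat.Coprime.mul_dvd_of_dvd_of_dvd ?_ (hdvd i (mem_insert_self i t))
      (ih (fun j hj k hk hjk => hcop j (mem_insert_of_mem hj) k (mem_insert_of_mem hk) hjk)
          (fun j hj => hdvd j (mem_insert_of_mem hj)))
    exact Nat.Coprime.prod_right fun j hj =>
      hcop i (mem_insert_self i t) j (mem_insert_of_mem hj) (fun h => hi (h ▸ hj))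

/-- Key numeric lemma: if all weights in `T` divide `N`, gcd's of triples are 1, and for every
`i ∈ T` the product of gcd's with the other members of `T` is at most half of `a i`, then the
sum of the weights in `T` is at most `N`. -/
private lemma side_sum_le {n : ℕ} (a : Fin (n + 1) → ℕ) (hapos : ∀ i, 0 < a i)
    (h1 : ∀ i j k : Fin (n + 1), i ≠ j → i ≠ k → j ≠ k →
      Nat.gcd (Nat.gcd (a i) (a j)) (a k) = 1) :
    ∀ (m : ℕ) (T : Finset (Fin (n + 1))) (N : ℕ), T.card = m → 0 < N →
      (∀ i ∈ T, a i ∣ N) →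
      (∀ i ∈ T, 2 * (∏ j ∈ T.erase i, Nat.gcd (a i) (a j)) ≤ a i) →
      ∑ i ∈ T, a i ≤ N := by
  have hcopfact : ∀ (i : Fin (n + 1)) (U : Finset (Fin (n + 1))), i ∉ U →
      ∀ j ∈ U, ∀ k ∈ U, j ≠ k →
      Nat.Coprime (Nat.gcd (a i) (a j)) (Nat.gcd (a i) (a k)) := by
    intro i U hiU j hj k hk hjk
    have hij : i ≠ j := fun h => hiU (h ▸ hj)
    have hik : i ≠ k := fun h => hiU (h ▸ hk)
    have hd : Nat.gcd (Nat.gcd (a i) (a j)) (Nat.gcd (a i) (a k)) ∣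
        Nat.gcd (Nat.gcd (a i) (a j)) (a k) :=
      Nat.dvd_gcd (Nat.gcd_dvd_left _ _)
        ((Nat.gcd_dvd_right _ _).trans (Nat.gcd_dvd_right _ _))
    rw [h1 i j k hij hik hjk] at hd
    exact Nat.dvd_one.mp hd
  intro m
  induction m using Nat.strong_induction_on with
  | _ m IH =>
    intro T N hcard hN hdvd hv
    rcases T.eq_empty_or_nonempty with rfl | ⟨i₀, hi₀⟩
    · simp
    have hvdvd : ∀ i ∈ T, (∏ j ∈ T.erase i, Nat.gcd (a i) (a j)) ∣ a i := by
      intro i hi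
      exact prod_cop_dvd _ _ _ (hcopfact i (T.erase i) (Finset.notMem_erase i T))
        (fun j _ => Nat.gcd_dvd_left _ _)
    have hvpos : ∀ i : Fin (n + 1), 0 < ∏ j ∈ T.erase i, Nat.gcd (a i) (a j) := by
      intro i
      exact Finset.prod_pos fun j _ => Nat.gcd_pos_of_pos_left _ (hapos i)
    by_cases hc1 : T.card = 1
    · obtain ⟨x, hx⟩ := Finset.card_eq_one.mp hc1
      subst hx
      simpa using Nat.le_of_dvd hN (hdvd x (Finset.mem_singleton_self x))
    -- |T| ≥ 2 : pick a second element j₀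
    have hcard2 : 2 ≤ T.card := by
      have := Finset.card_pos.mpr ⟨i₀, hi₀⟩
      omega
    have hT'ne : (T.erase i₀).Nonempty := by
      rw [← Finset.card_pos, Finset.card_erase_of_mem hi₀]
      omega
    obtain ⟨j₀, hj₀⟩ := hT'ne
    have hj₀T : j₀ ∈ T := Finset.mem_of_mem_erase hj₀
    have hj₀i₀ : j₀ ≠ i₀ := Finset.ne_of_mem_erase hj₀
    -- key divisibility : for i ∈ T, j ∈ T.erase i, a j * (a i / vᵢ) ∣ N
    have key : ∀ i ∈ T, ∀ j ∈ T.erase i,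
        a j * (a i / ∏ k ∈ T.erase i, Nat.gcd (a i) (a k)) ∣ N := by
      intro i hi j hj
      have hjT : j ∈ T := Finset.mem_of_mem_erase hj
      have huv : (a i / ∏ k ∈ T.erase i, Nat.gcd (a i) (a k)) *
          (∏ k ∈ T.erase i, Nat.gcd (a i) (a k)) = a i := Nat.div_mul_cancel (hvdvd i hi)
      have hgv : Nat.gcd (a i) (a j) ∣ ∏ k ∈ T.erase i, Nat.gcd (a i) (a k) :=
        Finset.dvd_prod_of_mem _ hj
      have hgpos : 0 < Nat.gcd (a i) (a j) := Nat.gcd_pos_of_pos_left _ (hapos i)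
      have h1' : (a i / ∏ k ∈ T.erase i, Nat.gcd (a i) (a k)) * Nat.gcd (a i) (a j) ∣ a i := by
        calc (a i / ∏ k ∈ T.erase i, Nat.gcd (a i) (a k)) * Nat.gcd (a i) (a j)
            ∣ (a i / ∏ k ∈ T.erase i, Nat.gcd (a i) (a k)) *
              (∏ k ∈ T.erase i, Nat.gcd (a i) (a k)) := mul_dvd_mul_left _ hgv
          _ = a i := huv
      have h2' : Nat.gcd (a i) (a j) *
          (a j * (a i / ∏ k ∈ T.erase i, Nat.gcd (a i) (a k))) ∣
          Nat.gcd (a i) (a j) * Nat.lcm (a i) (a j) := by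
        have hstep : a j * ((a i / ∏ k ∈ T.erase i, Nat.gcd (a i) (a k)) *
            Nat.gcd (a i) (a j)) ∣ a j * a i := mul_dvd_mul_left (a j) h1'
        have heq : a j * ((a i / ∏ k ∈ T.erase i, Nat.gcd (a i) (a k)) *
            Nat.gcd (a i) (a j)) = Nat.gcd (a i) (a j) *
            (a j * (a i / ∏ k ∈ T.erase i, Nat.gcd (a i) (a k))) := by ring
        have heq2 : a j * a i = Nat.gcd (a i) (a j) * Nat.lcm (a i) (a j) := by
          rw [Nat.gcd_mul_lcm]; ring
        rwa [heq, heq2] at hstep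
      have h3' : a j * (a i / ∏ k ∈ T.erase i, Nat.gcd (a i) (a k)) ∣ Nat.lcm (a i) (a j) :=
        (mul_dvd_mul_iff_left (show (Nat.gcd (a i) (a j) : ℕ) ≠ 0 from hgpos.ne')).mp h2'
      exact h3'.trans (Nat.lcm_dvd (hdvd i hi) (hdvd j hjT))
    -- abbreviations for i₀
    set v : ℕ := ∏ k ∈ T.erase i₀, Nat.gcd (a i₀) (a k) with hvdef
    set u : ℕ := a i₀ / v with hudef
    have huv : u * v = a i₀ := Nat.div_mul_cancel (hvdvd i₀ hi₀)
    have hu2 : 2 ≤ u := by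
      have h := hv i₀ hi₀
      rw [← hvdef, ← huv] at h
      exact Nat.le_of_mul_le_mul_right h (hvpos i₀)
    have huN : u ∣ N := (Dvd.intro v huv).trans (hdvd i₀ hi₀)
    have hupos : 0 < u := by omega
    -- 2 * a i₀ ≤ N
    have h2a : 2 * a i₀ ≤ N := by
      have hkey := key j₀ hj₀T i₀ (Finset.mem_erase.mpr ⟨hj₀i₀.symm, hi₀⟩)
      set v' : ℕ := ∏ k ∈ T.erase j₀, Nat.gcd (a j₀) (a k) with hv'def
      set u' : ℕ := a j₀ / v' with hu'def
      have huv' : u' * v' = a j₀ := Nat.div_mul_cancel (hvdvd j₀ hj₀T)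
      have hu2' : 2 ≤ u' := by
        have h := hv j₀ hj₀T
        rw [← hv'def, ← huv'] at h
        exact Nat.le_of_mul_le_mul_right h (hvpos j₀)
      have hle : a i₀ * u' ≤ N := Nat.le_of_dvd hN hkey
      have hmul : a i₀ * 2 ≤ a i₀ * u' := Nat.mul_le_mul_left _ hu2'
      omega
    -- the remaining weights divide N / u
    have hNu : ∀ j ∈ T.erase i₀, a j ∣ N / u := by
      intro j hj
      rw [Nat.dvd_div_iff_mul_dvd huN]
      have hthis := key i₀ hi₀ j hj
      rw [← hvdef, ← hudef] at hthis
      rwa [mul_comm] at hthis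
    -- the hv condition passes to T.erase i₀
    have hv' : ∀ j ∈ T.erase i₀,
        2 * (∏ k ∈ (T.erase i₀).erase j, Nat.gcd (a j) (a k)) ≤ a j := by
      intro j hj
      have hjT : j ∈ T := Finset.mem_of_mem_erase hj
      have hsub : (T.erase i₀).erase j ⊆ T.erase j := by
        intro x hx
        have hx1 := Finset.mem_erase.mp hx
        have hx2 := Finset.mem_erase.mp hx1.2
        exact Finset.mem_erase.mpr ⟨hx1.1, hx2.2⟩
      have hdvd' : (∏ k ∈ (T.erase i₀).erase j, Nat.gcd (a j) (a k)) ∣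
          (∏ k ∈ T.erase j, Nat.gcd (a j) (a k)) :=
        Finset.prod_dvd_prod_of_subset _ _ _ hsub
      have hle : (∏ k ∈ (T.erase i₀).erase j, Nat.gcd (a j) (a k)) ≤
          (∏ k ∈ T.erase j, Nat.gcd (a j) (a k)) := Nat.le_of_dvd (hvpos j) hdvd'
      have := hv j hjT
      omega
    -- apply the induction hypothesis
    have hcard' : (T.erase i₀).card = m - 1 := by
      rw [Finset.card_erase_of_mem hi₀, hcard]
    have hNupos : 0 < N / u := Nat.div_pos (Nat.le_of_dvd hN huN) hupos
    have hIH : ∑ j ∈ T.erase i₀, a j ≤ N / u :=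
      IH (m - 1) (by omega) (T.erase i₀) (N / u) hcard' hNupos hNu hv'
    have hsum : a i₀ + ∑ j ∈ T.erase i₀, a j = ∑ i ∈ T, a i :=
      Finset.add_sum_erase T a hi₀
    have hdivle : N / u ≤ N / 2 := Nat.div_le_div_left hu2 (by norm_num)
    omega

/-- under the hypotheses of the main theorem, the number of unit
weights among `a₀, …, aₙ` is at least `Σ aᵢ − d₁ − d₂` (the Fano index). -/
theorem stmt12 (n : ℕ) (a : Fin (n + 1) → ℕ) (d₁ d₂ : ℕ)
    (hapos : ∀ i, 0 < a i) (hd₁ : 0 < d₁) (hd₂ : 0 < d₂)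
    (h1 : ∀ i j k : Fin (n + 1), i ≠ j → i ≠ k → j ≠ k →
      Nat.gcd (Nat.gcd (a i) (a j)) (a k) = 1)
    (h2 : ∀ i, 1 < a i → a i ∣ d₁ ∨ a i ∣ d₂)
    (h3 : ∀ i j : Fin (n + 1), i ≠ j → 1 < Nat.gcd (a i) (a j) →
      Nat.gcd (a i) (a j) ∣ d₁ ∧ Nat.gcd (a i) (a j) ∣ d₂)
    (h4 : d₁ + d₂ < ∑ i, a i) :
    (∑ i, a i) - d₁ - d₂ ≤ (Finset.univ.filter (fun i => a i = 1)).card := by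
  classical
  -- coprimality of the gcd factors
  have hcopfact : ∀ (i : Fin (n + 1)) (U : Finset (Fin (n + 1))), i ∉ U →
      ∀ j ∈ U, ∀ k ∈ U, j ≠ k →
      Nat.Coprime (Nat.gcd (a i) (a j)) (Nat.gcd (a i) (a k)) := by
    intro i U hiU j hj k hk hjk
    have hij : i ≠ j := fun h => hiU (h ▸ hj)
    have hik : i ≠ k := fun h => hiU (h ▸ hk)
    have hd : Nat.gcd (Nat.gcd (a i) (a j)) (Nat.gcd (a i) (a k)) ∣
        Nat.gcd (Nat.gcd (a i) (a j)) (a k) :=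
      Nat.dvd_gcd (Nat.gcd_dvd_left _ _)
        ((Nat.gcd_dvd_right _ _).trans (Nat.gcd_dvd_right _ _))
    rw [h1 i j k hij hik hjk] at hd
    exact Nat.dvd_one.mp hd
  -- the finite set of valid colorings
  set V : Finset (Fin (n + 1) → Bool) :=
    Finset.univ.filter (fun c => ∀ i, 1 < a i → a i ∣ (bif c i then d₁ else d₂)) with hVdef
  have hVne : V.Nonempty := by
    refine ⟨fun i => decide (a i ∣ d₁), ?_⟩
    rw [hVdef, Finset.mem_filter]
    refine ⟨Finset.mem_univ _, fun i hi => ?_⟩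
    by_cases h : a i ∣ d₁
    · simp [h]
    · simpa [h] using (h2 i hi).resolve_left h
  obtain ⟨c, hcV, hcmax⟩ := V.exists_max_image (cutOf n a) hVne
  have hvalid : ∀ i, 1 < a i → a i ∣ (bif c i then d₁ else d₂) := by
    rw [hVdef, Finset.mem_filter] at hcV
    exact hcV.2
  -- the crucial "no flippable vertex" property of a maximal cut
  have sideLemma : ∀ (s : Bool) (i : Fin (n + 1)), 1 < a i → c i = s →
      2 * (∏ j ∈ (Finset.univ.filter (fun j => 1 < a j ∧ c j = s)).erase i,
        Nat.gcd (a i) (a j)) ≤ a i := by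
    intro s i hai hci
    by_contra hcon
    set T : Finset (Fin (n + 1)) := Finset.univ.filter (fun j => 1 < a j ∧ c j = s) with hTdef
    set v : ℕ := ∏ j ∈ T.erase i, Nat.gcd (a i) (a j) with hvdef
    have hiT : i ∈ T := by
      rw [hTdef, Finset.mem_filter]; exact ⟨Finset.mem_univ _, hai, hci⟩
    have hvdvd : v ∣ a i :=
      prod_cop_dvd _ _ _ (hcopfact i (T.erase i) (Finset.notMem_erase i T))
        (fun j _ => Nat.gcd_dvd_left _ _)
    have hvpos : 0 < v := Finset.prod_pos fun j _ => Nat.gcd_pos_of_pos_left _ (hapos i)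
    have hveq : v = a i := by
      obtain ⟨k, hk⟩ := hvdvd
      rcases k with _ | _ | k
      · have := hapos i; omega
      · omega
      · exfalso
        have hge : v * 2 ≤ v * (k + 2) := Nat.mul_le_mul_left _ (by omega)
        rw [← hk] at hge
        clear hk
        omega
    -- every "partner" of i lies in T.erase i
    have hpartner : ∀ k, k ≠ i → 1 < Nat.gcd (a i) (a k) → k ∈ T.erase i := by
      intro k hk hgk
      by_contra hkT
      have hcop : ∀ j ∈ T.erase i, Nat.Coprime (Nat.gcd (a i) (a k)) (Nat.gcd (a i) (a j)) := by
        intro j hj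
        have hjk : k ≠ j := by rintro rfl; exact hkT hj
        refine Nat.Coprime.symm ?_
        refine hcopfact i (insert k (T.erase i)) ?_ j (Finset.mem_insert_of_mem hj)
          k (Finset.mem_insert_self _ _) hjk.symm
        intro hmem
        rcases Finset.mem_insert.mp hmem with h | h
        · exact hk h.symm
        · exact Finset.notMem_erase i T h
      have hcopv : Nat.Coprime (Nat.gcd (a i) (a k)) v :=
        Nat.Coprime.prod_right fun j hj => hcop j hj
      rw [hveq] at hcopv
      have hdvd : Nat.gcd (a i) (a k) ∣ a i := Nat.gcd_dvd_left _ _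
      have := hcopv.eq_one_of_dvd hdvd
      omega
    -- there is at least one partner
    have hex : ∃ j₀ ∈ T.erase i, 1 < Nat.gcd (a i) (a j₀) := by
      by_contra hne
      push_neg at hne
      have hone : v = 1 := Finset.prod_eq_one (fun j hj => by
        have h1' := hne j hj
        have h2' : 0 < Nat.gcd (a i) (a j) := Nat.gcd_pos_of_pos_left _ (hapos i)
        omega)
      omega
    obtain ⟨j₀, hj₀, hg₀⟩ := hex
    have hj₀i : j₀ ≠ i := Finset.ne_of_mem_erase hj₀
    have hj₀s : c j₀ = s := by
      have h := (Finset.mem_filter.mp (Finset.mem_of_mem_erase hj₀)).2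
      exact h.2
    -- the flipped coloring
    set c' : Fin (n + 1) → Bool := Function.update c i (!s) with hc'def
    have hc'i : c' i = !s := by rw [hc'def]; exact Function.update_self i (!s) c
    have hc'other : ∀ j, j ≠ i → c' j = c j := by
      intro j hj
      rw [hc'def]
      exact Function.update_of_ne hj (!s) c
    have hc'V : c' ∈ V := by
      rw [hVdef, Finset.mem_filter]
      refine ⟨Finset.mem_univ _, fun j hj => ?_⟩
      by_cases hji : j = i
      · subst hji
        rw [hc'i, ← hveq]
        refine prod_cop_dvd _ _ _ (hcopfact j (T.erase j) (Finset.notMem_erase j T)) ?_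
        intro k hk
        have hjk : j ≠ k := by
          rintro rfl
          exact Finset.notMem_erase j T hk
        rcases Nat.lt_or_ge 1 (Nat.gcd (a j) (a k)) with h | h
        · have hboth := h3 j k hjk h
          cases s
          · simpa using hboth.1
          · simpa using hboth.2
        · have hpos : 0 < Nat.gcd (a j) (a k) := Nat.gcd_pos_of_pos_left _ (hapos j)
          have hone : Nat.gcd (a j) (a k) = 1 := by omega
          rw [hone]
          exact one_dvd _
      · rw [hc'other j hji]
        exact hvalid j hj
    -- the cut strictly increases : contradiction with maximality
    have hsub : ((Finset.univ : Finset (Fin (n + 1) × Fin (n + 1))).filter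
        (fun p => p.1 ≠ p.2 ∧ 1 < Nat.gcd (a p.1) (a p.2) ∧ c p.1 ≠ c p.2)) ⊆
        ((Finset.univ : Finset (Fin (n + 1) × Fin (n + 1))).filter
        (fun p => p.1 ≠ p.2 ∧ 1 < Nat.gcd (a p.1) (a p.2) ∧ c' p.1 ≠ c' p.2)) := by
      intro p hp
      rw [Finset.mem_filter] at hp ⊢
      obtain ⟨hpu, hne, hg, hcc⟩ := hp
      have hp1 : p.1 ≠ i := by
        intro h
        have hp2i : p.2 ≠ i := fun h2 => hne (by rw [h, h2])
        have hmem := hpartner p.2 hp2i (by rw [← h]; exact hg)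
        have hcp2 : c p.2 = s := (Finset.mem_filter.mp (Finset.mem_of_mem_erase hmem)).2.2
        rw [h] at hcc
        exact hcc (by rw [hci, hcp2])
      have hp2 : p.2 ≠ i := by
        intro h
        have hg' : 1 < Nat.gcd (a i) (a p.1) := by
          rw [h] at hg
          rw [Nat.gcd_comm]
          exact hg
        have hmem := hpartner p.1 hp1 hg'
        have hcp1 : c p.1 = s := (Finset.mem_filter.mp (Finset.mem_of_mem_erase hmem)).2.2
        rw [h] at hcc
        exact hcc (by rw [hci, hcp1])
      rw [hc'other p.1 hp1, hc'other p.2 hp2]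
      exact ⟨hpu, hne, hg, hcc⟩
    have hmemnew : (i, j₀) ∈ ((Finset.univ : Finset (Fin (n + 1) × Fin (n + 1))).filter
        (fun p => p.1 ≠ p.2 ∧ 1 < Nat.gcd (a p.1) (a p.2) ∧ c' p.1 ≠ c' p.2)) := by
      rw [Finset.mem_filter]
      refine ⟨Finset.mem_univ _, hj₀i.symm, hg₀, ?_⟩
      show c' i ≠ c' j₀
      rw [hc'i, hc'other j₀ hj₀i, hj₀s]
      cases s <;> simp
    have hmemold : (i, j₀) ∉ ((Finset.univ : Finset (Fin (n + 1) × Fin (n + 1))).filter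
        (fun p => p.1 ≠ p.2 ∧ 1 < Nat.gcd (a p.1) (a p.2) ∧ c p.1 ≠ c p.2)) := by
      rw [Finset.mem_filter]
      rintro ⟨-, -, -, hcc⟩
      exact hcc (by show c i = c j₀; rw [hci, hj₀s])
    have hlt : ((Finset.univ : Finset (Fin (n + 1) × Fin (n + 1))).filter
        (fun p => p.1 ≠ p.2 ∧ 1 < Nat.gcd (a p.1) (a p.2) ∧ c p.1 ≠ c p.2)).card <
        ((Finset.univ : Finset (Fin (n + 1) × Fin (n + 1))).filter
        (fun p => p.1 ≠ p.2 ∧ 1 < Nat.gcd (a p.1) (a p.2) ∧ c' p.1 ≠ c' p.2)).card :=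
      Finset.card_lt_card ((Finset.ssubset_iff_of_subset hsub).mpr ⟨(i, j₀), hmemnew, hmemold⟩)
    have hlt' : cutOf n a c < cutOf n a c' := hlt
    exact absurd (hcmax c' hc'V) (not_le.mpr hlt')
  -- apply the key lemma to both sides
  have hside : ∀ s : Bool,
      ∑ i ∈ Finset.univ.filter (fun j => 1 < a j ∧ c j = s), a i ≤
        (bif s then d₁ else d₂) := by
    intro s
    refine side_sum_le a hapos h1 _ _ _ rfl ?_ ?_ ?_
    · cases s
      · exact hd₂
      · exact hd₁
    · intro i hi
      have h := Finset.mem_filter.mp hi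
      have hval := hvalid i h.2.1
      rwa [h.2.2] at hval
    · intro i hi
      have h := Finset.mem_filter.mp hi
      exact sideLemma s i h.2.1 h.2.2
  have ht : ∑ i ∈ Finset.univ.filter (fun j => 1 < a j ∧ c j = true), a i ≤ d₁ := hside true
  have hf : ∑ i ∈ Finset.univ.filter (fun j => 1 < a j ∧ c j = false), a i ≤ d₂ := hside false
  -- split the total sum
  have hs1 : ∑ i ∈ Finset.univ.filter (fun i => a i = 1), a i
      + ∑ i ∈ Finset.univ.filter (fun i => ¬ a i = 1), a i = ∑ i, a i :=
    Finset.sum_filter_add_sum_filter_not _ _ _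
  have hcard1 : ∑ i ∈ Finset.univ.filter (fun i => a i = 1), a i
      = (Finset.univ.filter (fun i => a i = 1)).card := by
    rw [Finset.card_eq_sum_ones]
    exact Finset.sum_congr rfl fun i hi => (Finset.mem_filter.mp hi).2
  have hfe : (Finset.univ.filter (fun i => ¬ a i = 1) : Finset (Fin (n + 1)))
      = Finset.univ.filter (fun i => 1 < a i) := by
    apply Finset.filter_congr
    intro i _
    have := hapos i
    omega
  have hs2 : ∑ i ∈ Finset.univ.filter (fun i => 1 < a i), a i
      = ∑ i ∈ Finset.univ.filter (fun j => 1 < a j ∧ c j = true), a i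
      + ∑ i ∈ Finset.univ.filter (fun j => 1 < a j ∧ c j = false), a i := by
    rw [← Finset.sum_filter_add_sum_filter_not
      (Finset.univ.filter (fun i => 1 < a i)) (fun i => c i = true) a,
      Finset.filter_filter, Finset.filter_filter]
    congr 1
    refine Finset.sum_congr ?_ (fun _ _ => rfl)
    apply Finset.filter_congr
    intro i _
    simp [Bool.not_eq_true]
  rw [hfe, hs2, hcard1] at hs1
  omega
end

section
/- Let α : V → ℕ be a WP-weight system on a finite set V, and suppose v₁, v₂, v₃ ∈ V are three distinct vertices with α(v₁) = 6, α(v₂) = 10, α(v₃) = 15. Then for every vertex w ∈ V \ {v₁, v₂, v₃}, the weight α(w) is coprime to each of 6, 10, and 15 (equivalently, gcd(α(w), 30) = 1); in particular the three vertices v₁, v₂, v₃ form a connected component of the associated coprimality graph, and no other triple of distinct vertices of V has multiset of weights {6, 10, 15}. -/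
/-- A WP-weight system: every weight is at least `2`, and any three weights at
distinct vertices are (setwise) coprime. -/
def WPSystem {V : Type} (α : V → ℕ) : Prop :=
  (∀ v, 2 ≤ α v) ∧
    ∀ v₁ v₂ v₃ : V, v₁ ≠ v₂ → v₁ ≠ v₃ → v₂ ≠ v₃ →
      Nat.gcd (Nat.gcd (α v₁) (α v₂)) (α v₃) = 1

/-- The coprimality graph of a weight system: distinct vertices are adjacent iff
their weights are not coprime. -/
def coprimeGraph {V : Type} (α : V → ℕ) : SimpleGraph V where
  Adj v w := v ≠ w ∧ 1 < Nat.gcd (α v) (α w)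
  symm := ⟨fun v w h => ⟨h.1.symm, by rw [Nat.gcd_comm]; exact h.2⟩⟩
  loopless := ⟨fun v h => h.1 rfl⟩

/-- A vertex `v` is weak if it is adjacent to some vertex `w` with `α v ∣ α w`. -/
def IsWeak {V : Type} (α : V → ℕ) (v : V) : Prop :=
  ∃ w, w ≠ v ∧ 1 < Nat.gcd (α v) (α w) ∧ α v ∣ α w

/-- if a WP-weight system has three distinct vertices of weights
`6`, `10`, `15`, then every other weight is coprime to `30`; in particular, the
three vertices form a connected component of the coprimality graph, and no
other triple of distinct vertices has multiset of weights `{6, 10, 15}`. -/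
theorem stmt16 {V : Type} [Fintype V] [DecidableEq V] (α : V → ℕ)
    (hWP : WPSystem α) (v₁ v₂ v₃ : V)
    (h12 : v₁ ≠ v₂) (h13 : v₁ ≠ v₃) (h23 : v₂ ≠ v₃)
    (ha1 : α v₁ = 6) (ha2 : α v₂ = 10) (ha3 : α v₃ = 15) :
    (∀ w : V, w ≠ v₁ → w ≠ v₂ → w ≠ v₃ → Nat.Coprime (α w) 30) ∧
    ((coprimeGraph α).connectedComponentMk v₁).supp = {v₁, v₂, v₃} ∧
    (∀ w₁ w₂ w₃ : V, w₁ ≠ w₂ → w₁ ≠ w₃ → w₂ ≠ w₃ →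
      ({α w₁, α w₂, α w₃} : Multiset ℕ) = ({6, 10, 15} : Multiset ℕ) →
      ({w₁, w₂, w₃} : Set V) = {v₁, v₂, v₃}) := by
  -- Part 1
  have part1 : ∀ w : V, w ≠ v₁ → w ≠ v₂ → w ≠ v₃ → Nat.Coprime (α w) 30 := by
    intro w hw1 hw2 hw3
    have t12 := hWP.2 w v₁ v₂ hw1 hw2 h12
    have t13 := hWP.2 w v₁ v₃ hw1 hw3 h13
    have t23 := hWP.2 w v₂ v₃ hw2 hw3 h23
    rw [ha1, ha2] at t12
    rw [ha1, ha3] at t13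
    rw [ha2, ha3] at t23
    have h2 : ¬ (2 ∣ α w) := by
      intro h
      have : (2:ℕ) ∣ Nat.gcd (Nat.gcd (α w) 6) 10 :=
        Nat.dvd_gcd (Nat.dvd_gcd h (by norm_num)) (by norm_num)
      rw [t12] at this; exact absurd this (by norm_num)
    have h3 : ¬ (3 ∣ α w) := by
      intro h
      have : (3:ℕ) ∣ Nat.gcd (Nat.gcd (α w) 6) 15 :=
        Nat.dvd_gcd (Nat.dvd_gcd h (by norm_num)) (by norm_num)
      rw [t13] at this; exact absurd this (by norm_num)
    have h5 : ¬ (5 ∣ α w) := by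
      intro h
      have : (5:ℕ) ∣ Nat.gcd (Nat.gcd (α w) 10) 15 :=
        Nat.dvd_gcd (Nat.dvd_gcd h (by norm_num)) (by norm_num)
      rw [t23] at this; exact absurd this (by norm_num)
    have : Nat.Coprime (α w) (2*(3*5)) := by
      rw [Nat.coprime_mul_iff_right, Nat.coprime_mul_iff_right]
      exact ⟨Nat.coprime_comm.mp (Nat.Prime.coprime_iff_not_dvd Nat.prime_two |>.mpr h2),
        Nat.coprime_comm.mp (Nat.Prime.coprime_iff_not_dvd Nat.prime_three |>.mpr h3),
        Nat.coprime_comm.mp (Nat.Prime.coprime_iff_not_dvd (by norm_num) |>.mpr h5)⟩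
    simpa using this
  refine ⟨part1, ?_, ?_⟩
  · -- connected component
    have adj12 : (coprimeGraph α).Adj v₁ v₂ := ⟨h12, by rw [ha1, ha2]; norm_num⟩
    have adj13 : (coprimeGraph α).Adj v₁ v₃ := ⟨h13, by rw [ha1, ha3]; norm_num⟩
    have closed : ∀ a b : V, a ∈ ({v₁, v₂, v₃} : Set V) → (coprimeGraph α).Adj a b →
        b ∈ ({v₁, v₂, v₃} : Set V) := by
      intro a b ha hab
      by_contra hb
      simp only [Set.mem_insert_iff, Set.mem_singleton_iff, not_or] at hb
      have hcop : Nat.Coprime (α b) 30 := part1 b hb.1 hb.2.1 hb.2.2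
      have hdvd30 : α a ∣ 30 := by
        rcases ha with h | h | h <;> subst h <;>
          simp only [ha1, ha2, ha3] <;> norm_num
      have : Nat.gcd (α a) (α b) ∣ Nat.gcd (α b) 30 :=
        Nat.dvd_gcd (Nat.gcd_dvd_right _ _) ((Nat.gcd_dvd_left _ _).trans hdvd30)
      rw [hcop] at this
      have h1 := Nat.le_of_dvd one_pos this
      exact absurd hab.2 (by omega)
    have key : ∀ a x : V, (coprimeGraph α).Walk a x → a ∈ ({v₁, v₂, v₃} : Set V) →
        x ∈ ({v₁, v₂, v₃} : Set V) := by
      intro a x p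
      induction p with
      | nil => exact id
      | cons h _ ih => intro ha; exact ih (closed _ _ ha h)
    ext x
    simp only [SimpleGraph.ConnectedComponent.mem_supp_iff, SimpleGraph.ConnectedComponent.eq]
    constructor
    · intro hr
      obtain ⟨p⟩ := hr.symm
      exact key _ _ p (by simp)
    · intro hx
      rcases hx with h | h | h <;> subst h
      · rfl
      · exact adj12.symm.reachable
      · exact adj13.symm.reachable
  · -- uniqueness of the triple
    intro w₁ w₂ w₃ hw12 hw13 hw23 hmul
    have hmem : ∀ w : V, w ∈ ({w₁, w₂, w₃} : Set V) → w ∈ ({v₁, v₂, v₃} : Set V) := by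
      intro w hw
      have hαw : α w ∈ ({6, 10, 15} : Multiset ℕ) := by
        rw [← hmul]
        rcases hw with h | h | h <;> subst h <;> simp
      by_contra hv
      simp only [Set.mem_insert_iff, Set.mem_singleton_iff, not_or] at hv
      have hcop : Nat.Coprime (α w) 30 := part1 w hv.1 hv.2.1 hv.2.2
      simp only [Multiset.insert_eq_cons, Multiset.mem_cons, Multiset.mem_singleton] at hαw
      rcases hαw with h | h | h <;> rw [h] at hcop <;> revert hcop <;> decide
    have hsub : ({w₁, w₂, w₃} : Finset V) ⊆ ({v₁, v₂, v₃} : Finset V) := by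
      intro x hx
      simp only [Finset.mem_insert, Finset.mem_singleton] at hx ⊢
      have := hmem x (by simpa [Set.mem_insert_iff] using hx)
      simpa [Set.mem_insert_iff] using this
    have hcard1 : ({w₁, w₂, w₃} : Finset V).card = 3 := by
      rw [Finset.card_insert_of_notMem (by simp [hw12, hw13]),
        Finset.card_insert_of_notMem (by simp [hw23]), Finset.card_singleton]
    have hcard2 : ({v₁, v₂, v₃} : Finset V).card ≤ 3 := by
      apply (Finset.card_insert_le _ _).trans
      have := Finset.card_insert_le v₂ ({v₃} : Finset V)
      simp at this ⊢; omega
    have heq : ({w₁, w₂, w₃} : Finset V) = ({v₁, v₂, v₃} : Finset V) :=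
      Finset.eq_of_subset_of_card_le hsub (by omega)
    have := congrArg (fun s : Finset V => (s : Set V)) heq
    simpa using this
end
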